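/- Let X and Y be Banach spaces, A ⊆ X an open subset, W ⊆ X a finite-dimensional subspace, and K ⊆ W ∩ A a compact and convex subset. Let F ∈ C¹(A,Y) be such that the restriction F|_{W∩A} is injective and, for every x ∈ W ∩ A, the restriction F'(x)|_W of the Fréchet derivative to W is injective. Then there exists a constant C > 0 such that ‖x₁ − x₂‖_X ≤ C ‖F(x₁) − F(x₂)‖_Y for all x₁, x₂ ∈ K. -/

import Mathlib

set_option maxHeartbeats 1000000


open Filter Topology

/-- Theorem `theo:lip`: Lipschitz stability with infinite-dimensional
measurements, for a C¹ map injective on a finite-dimensional subspace. -/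
theorem lipschitz_stability_full_measurements
    {X Y : Type*} [NormedAddCommGroup X] [NormedSpace ℝ X] [CompleteSpace X]
    [NormedAddCommGroup Y] [NormedSpace ℝ Y] [CompleteSpace Y]
    (A : Set X) (hA : IsOpen A)
    (W : Submodule ℝ X) [FiniteDimensional ℝ W]
    (K : Set X) (hKWA : K ⊆ (W : Set X) ∩ A)
    (hKcomp : IsCompact K) (hKconv : Convex ℝ K)
    (F : X → Y) (F' : X → X →L[ℝ] Y)
    (hF : ∀ x ∈ A, HasFDerivAt F (F' x) x)
    (hF'cont : ContinuousOn F' A)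
    (hFinj : Set.InjOn F ((W : Set X) ∩ A))
    (hF'inj : ∀ x ∈ (W : Set X) ∩ A, Set.InjOn (F' x) (W : Set X)) :
    ∃ C > 0, ∀ x₁ ∈ K, ∀ x₂ ∈ K, ‖x₁ - x₂‖ ≤ C * ‖F x₁ - F x₂‖ := by
  by_contra hcon
  push_neg at hcon
  choose! x hx y hy hlt using fun n : ℕ => hcon ((n : ℝ) + 1) (by positivity)
  -- x n ≠ y n
  have hxy : ∀ n, 0 < ‖x n - y n‖ := by
    intro n
    refine lt_of_le_of_lt ?_ (hlt n)
    positivity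
  -- diameter bound
  obtain ⟨R, hR⟩ := Metric.isBounded_iff.1 hKcomp.isBounded
  have hR0 : 0 ≤ R := le_trans dist_nonneg (hR (hx 0) (hy 0))
  -- subsequences
  obtain ⟨a, haK, φ, hφ, hxa⟩ := hKcomp.tendsto_subseq hx
  obtain ⟨b, hbK, ψ, hψ, hyb⟩ := hKcomp.tendsto_subseq (fun n => hy (φ n))
  set σ : ℕ → ℕ := φ ∘ ψ with hσdef
  have hσ : StrictMono σ := hφ.comp hψ
  have hxsa : Tendsto (fun n => x (σ n)) atTop (𝓝 a) := hxa.comp hψ.tendsto_atTop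
  have hysb : Tendsto (fun n => y (σ n)) atTop (𝓝 b) := hyb
  have haWA : a ∈ (W : Set X) ∩ A := hKWA haK
  have hbWA : b ∈ (W : Set X) ∩ A := hKWA hbK
  -- ‖F xₙ - F yₙ‖ → 0
  have hFsmall : ∀ n, ‖F (x n) - F (y n)‖ ≤ R / ((n : ℝ) + 1) := by
    intro n
    rw [div_eq_inv_mul, ← mul_le_mul_iff_right₀ (show (0:ℝ) < (n:ℝ)+1 by positivity)]
    calc ((n:ℝ)+1) * ‖F (x n) - F (y n)‖ ≤ ‖x n - y n‖ := (hlt n).le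
    _ = dist (x n) (y n) := (dist_eq_norm _ _).symm
    _ ≤ R := hR (hx n) (hy n)
    _ = ((n:ℝ)+1) * (((n:ℝ)+1)⁻¹ * R) := by field_simp
  have htend0 : Tendsto (fun n => ‖F (x (σ n)) - F (y (σ n))‖) atTop (𝓝 0) := by
    apply squeeze_zero (fun n => norm_nonneg _) (fun n => ?_)
    · have : Tendsto (fun n : ℕ => R / ((n : ℝ) + 1)) atTop (𝓝 0) := by
        apply Tendsto.div_atTop tendsto_const_nhds
        exact tendsto_atTop_add_const_right _ _ tendsto_natCast_atTop_atTop
      exact this.comp hσ.tendsto_atTop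
    · exact hFsmall (σ n)
  -- F a = F b, hence a = b
  have hFcont : ∀ z ∈ A, ContinuousAt F z := fun z hz => (hF z hz).continuousAt
  have hFab : F a = F b := by
    have h1 : Tendsto (fun n => F (x (σ n)) - F (y (σ n))) atTop (𝓝 (F a - F b)) :=
      (((hFcont a haWA.2).tendsto.comp hxsa).sub ((hFcont b hbWA.2).tendsto.comp hysb))
    have h2 : Tendsto (fun n => F (x (σ n)) - F (y (σ n))) atTop (𝓝 0) :=
      tendsto_zero_iff_norm_tendsto_zero.2 htend0
    exact sub_eq_zero.1 (tendsto_nhds_unique h1 h2)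
  have hab : a = b := hFinj haWA hbWA hFab
  subst hab
  -- the unit sphere of W inside X
  set S : Set X := Subtype.val '' (Metric.sphere (0 : W) 1) with hSdef
  have hScomp : IsCompact S := (isCompact_sphere (0 : W) 1).image continuous_subtype_val
  -- normalized differences
  set u : ℕ → X := fun n => ‖x n - y n‖⁻¹ • (x n - y n) with hudef
  have huS : ∀ n, u n ∈ S := by
    intro n
    have hmem : u n ∈ W := W.smul_mem _ (W.sub_mem (hKWA (hx n)).1 (hKWA (hy n)).1)
    have hnorm : ‖u n‖ = 1 := by
      simp only [hudef, norm_smul, norm_inv, norm_norm]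
      exact inv_mul_cancel₀ (hxy n).ne'
    refine ⟨⟨u n, hmem⟩, ?_, rfl⟩
    rw [Metric.mem_sphere, dist_zero_right]
    exact hnorm
  -- minimum of ‖F' a z‖ on S
  obtain ⟨w, hwS, hwmin⟩ := hScomp.exists_isMinOn ⟨u 0, huS 0⟩
    ((F' a).continuous.norm.continuousOn)
  set c : ℝ := ‖F' a w‖ with hcdef
  have hwW : w ∈ (W : Set X) := by
    obtain ⟨ω, -, rfl⟩ := hwS
    exact ω.2
  have hw1 : ‖w‖ = 1 := by
    obtain ⟨ω, hω, rfl⟩ := hwS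
    rw [Metric.mem_sphere, dist_zero_right] at hω
    exact hω
  have hc : 0 < c := by
    rw [hcdef, norm_pos_iff]
    intro h0
    have : w = 0 := hF'inj a haWA hwW W.zero_mem (by rw [map_zero]; exact h0)
    rw [this] at hw1; simp at hw1
  -- neighborhood where ‖F' z - F' a‖ ≤ c/2 and z ∈ A
  have hca : ContinuousAt F' a := hF'cont.continuousAt (hA.mem_nhds haWA.2)
  have hev : ∀ᶠ z in 𝓝 a, ‖F' z - F' a‖ < c / 2 ∧ z ∈ A := by
    refine Filter.Eventually.and ?_ (hA.eventually_mem haWA.2)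
    have := hca (Metric.ball_mem_nhds (F' a) (half_pos hc))
    exact Filter.mem_of_superset this fun z hz => by simpa [Set.mem_preimage, Metric.mem_ball, dist_eq_norm] using hz
  obtain ⟨r, hr, hball⟩ := Metric.eventually_nhds_iff_ball.1 hev
  -- choose a good index
  obtain ⟨N, hN⟩ := exists_nat_one_div_lt (half_pos hc)
  have hevx : ∀ᶠ n in atTop, x (σ n) ∈ Metric.ball a r := hxsa (Metric.ball_mem_nhds a hr)
  have hevy : ∀ᶠ n in atTop, y (σ n) ∈ Metric.ball a r := hysb (Metric.ball_mem_nhds a hr)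
  obtain ⟨n, ⟨hnx, hny⟩, hnN⟩ := ((hevx.and hevy).and (eventually_ge_atTop N)).exists
  set m := σ n with hmdef
  have hmN : (N : ℝ) ≤ (m : ℝ) := by
    exact_mod_cast le_trans hnN (hσ.le_apply)
  have hsmall : 1 / ((m : ℝ) + 1) < c / 2 :=
    lt_of_le_of_lt (by apply one_div_le_one_div_of_le <;> linarith) hN
  -- mean value inequality on the ball
  have hmvt : ‖F (x m) - F (y m) - (F' a) (x m - y m)‖ ≤ (c / 2) * ‖x m - y m‖ := by
    refine Convex.norm_image_sub_le_of_norm_hasFDerivWithin_le'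
      (fun z hz => (hF z (hball z hz).2).hasFDerivWithinAt)
      (fun z hz => (hball z hz).1.le) (convex_ball a r) hny hnx
  -- final contradiction
  have hd : 0 < ‖x m - y m‖ := hxy m
  have key : ‖(F' a) (x m - y m)‖ < (1 / ((m:ℝ)+1) + c / 2) * ‖x m - y m‖ := by
    have h1 : ‖(F' a) (x m - y m)‖ ≤ ‖F (x m) - F (y m)‖
        + ‖F (x m) - F (y m) - (F' a) (x m - y m)‖ := by
      simpa [sub_sub_cancel] using norm_sub_le (F (x m) - F (y m))
        (F (x m) - F (y m) - (F' a) (x m - y m))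
    have h2 : ‖F (x m) - F (y m)‖ < (1 / ((m:ℝ)+1)) * ‖x m - y m‖ := by
      rw [div_mul_eq_mul_div, lt_div_iff₀ (by positivity), one_mul, mul_comm]
      exact hlt m
    calc ‖(F' a) (x m - y m)‖ ≤ ‖F (x m) - F (y m)‖
        + ‖F (x m) - F (y m) - (F' a) (x m - y m)‖ := h1
      _ < (1 / ((m:ℝ)+1)) * ‖x m - y m‖ + (c/2) * ‖x m - y m‖ :=
        add_lt_add_of_lt_of_le h2 hmvt
      _ = (1 / ((m:ℝ)+1) + c / 2) * ‖x m - y m‖ := by ring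
  have hcu : c ≤ ‖(F' a) (u m)‖ := hwmin (huS m)
  have hunorm : ‖(F' a) (u m)‖ = ‖x m - y m‖⁻¹ * ‖(F' a) (x m - y m)‖ := by
    simp [hudef, map_smul, norm_smul, abs_of_pos (inv_pos.2 hd)]
  have hfin : c < 1 / ((m:ℝ)+1) + c / 2 := by
    have h3 : ‖x m - y m‖⁻¹ * ‖(F' a) (x m - y m)‖
        < ‖x m - y m‖⁻¹ * ((1 / ((m:ℝ)+1) + c / 2) * ‖x m - y m‖) :=
      mul_lt_mul_of_pos_left key (inv_pos.2 hd)
    have h4 : ‖x m - y m‖⁻¹ * ((1 / ((m:ℝ)+1) + c / 2) * ‖x m - y m‖)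
        = 1 / ((m:ℝ)+1) + c / 2 := by field_simp
    rw [hunorm] at hcu
    linarith
  linarith
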